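/- arXiv:1503.08900 — 2 statements merged into one kernel-verified Lean document; each statement's English description precedes it below -/
import Mathlib

section
/- If a correspondence \Psi from a topological space S into \mathbb{R}^l is compact valued and upper hemicontinuous, then the correspondence s \mapsto co(\Psi(s)) (the convex hull of \Psi(s)) is compact valued and upper hemicontinuous. -/
open Set Function

/-- Convex hull of a compact set in `ℝ^l` is compact. -/
lemma isCompact_convexHull_aux {n : ℕ} {s : Set (EuclideanSpace ℝ (Fin n))}
    (hs : IsCompact s) : IsCompact (convexHull ℝ s) := by
  classical
  rcases s.eq_empty_or_nonempty with rfl | ⟨x₀, hx₀⟩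
  · simp
  have hfc : Continuous (fun p : (Fin (n+1) → ℝ) × (Fin (n+1) → EuclideanSpace ℝ (Fin n)) =>
      ∑ i, p.1 i • p.2 i) := by
    apply continuous_finset_sum
    intro i _
    exact ((continuous_apply i).comp continuous_fst).smul
      ((continuous_apply i).comp continuous_snd)
  have hK : IsCompact ((stdSimplex ℝ (Fin (n+1))) ×ˢ (Set.univ.pi fun _ : Fin (n+1) => s)) :=
    (isCompact_stdSimplex ℝ _).prod (isCompact_univ_pi fun _ => hs)
  have heq : convexHull ℝ s =
      (fun p : (Fin (n+1) → ℝ) × (Fin (n+1) → EuclideanSpace ℝ (Fin n)) => ∑ i, p.1 i • p.2 i) ''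
        ((stdSimplex ℝ (Fin (n+1))) ×ˢ (Set.univ.pi fun _ : Fin (n+1) => s)) := by
    apply Set.Subset.antisymm
    · intro x hx
      obtain ⟨ι, hι, z, w, hzs, hai, hwpos, hwsum, hx⟩ :=
        eq_pos_convex_span_of_mem_convexHull hx
      have hcard : Fintype.card ι ≤ n + 1 := by
        calc Fintype.card ι ≤ Module.finrank ℝ (vectorSpan ℝ (Set.range z)) + 1 :=
              hai.card_le_finrank_succ
          _ ≤ Module.finrank ℝ (EuclideanSpace ℝ (Fin n)) + 1 :=
              Nat.add_le_add_right (Submodule.finrank_le _) 1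
          _ = n + 1 := by simp [finrank_euclideanSpace_fin]
      obtain ⟨g⟩ : Nonempty (ι ↪ Fin (n+1)) := by
        rw [Function.Embedding.nonempty_iff_card_le]
        simpa using hcard
      have hw'0 : ∀ i, i ∉ Set.range g → Function.extend g w 0 i = 0 := by
        intro i hi
        rw [Function.extend_apply' _ _ _ (by simpa [Set.range] using hi)]
        rfl
      refine ⟨(Function.extend g w 0, Function.extend g z (fun _ => x₀)), ⟨⟨?_, ?_⟩, ?_⟩, ?_⟩
      · intro i
        by_cases hi : i ∈ Set.range g
        · obtain ⟨a, rfl⟩ := hi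
          show (0:ℝ) ≤ Function.extend g w 0 (g a)
          rw [g.injective.extend_apply]
          exact (hwpos a).le
        · show (0:ℝ) ≤ Function.extend g w 0 i
          rw [hw'0 i hi]
      · show ∑ i, Function.extend g w 0 i = 1
        rw [← hwsum]
        refine (Finset.sum_of_injOn g (g.injective.injOn) (by simp) ?_ ?_).symm
        · intro i _ hi
          exact hw'0 i (by simpa using hi)
        · intro a _
          exact (g.injective.extend_apply _ _ _).symm
      · intro i _
        show Function.extend g z (fun _ => x₀) i ∈ s
        by_cases hi : i ∈ Set.range g
        · obtain ⟨a, rfl⟩ := hi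
          rw [g.injective.extend_apply]
          exact hzs ⟨a, rfl⟩
        · rw [Function.extend_apply' _ _ _ (by simpa [Set.range] using hi)]
          exact hx₀
      · show ∑ i, Function.extend g w 0 i • Function.extend g z (fun _ => x₀) i = x
        rw [← hx]
        refine (Finset.sum_of_injOn g (g.injective.injOn) (by simp) ?_ ?_).symm
        · intro i _ hi
          rw [hw'0 i (by simpa using hi), zero_smul]
        · intro a _
          rw [g.injective.extend_apply, g.injective.extend_apply]
    · rintro x ⟨⟨w, z⟩, ⟨⟨hw0, hw1⟩, hz⟩, rfl⟩
      exact (convex_convexHull ℝ s).sum_mem (fun i _ => hw0 i) hw1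
        (fun i _ => subset_convexHull ℝ s (hz i (Set.mem_univ i)))
  rw [heq]
  exact hK.image hfc

/-- `F` is upper hemicontinuous if the upper inverse of every open set is open. -/
def UpperHemicontinuousCorr {S X : Type*} [TopologicalSpace S] [TopologicalSpace X]
    (F : S → Set X) : Prop :=
  ∀ O : Set X, IsOpen O → IsOpen {s : S | F s ⊆ O}

/-- If a correspondence into `ℝ^l` is compact valued and upper hemicontinuous, then
its pointwise convex hull is compact valued and upper hemicontinuous. -/
theorem convexHull_upperHemicontinuous {S : Type*} [TopologicalSpace S] (l : ℕ)
    (Ψ : S → Set (EuclideanSpace ℝ (Fin l)))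
    (hc : ∀ s, IsCompact (Ψ s)) (h : UpperHemicontinuousCorr Ψ) :
    (∀ s, IsCompact (convexHull ℝ (Ψ s))) ∧
      UpperHemicontinuousCorr (fun s => convexHull ℝ (Ψ s)) := by
  refine ⟨fun s => isCompact_convexHull_aux (hc s), ?_⟩
  intro O hO
  rw [isOpen_iff_mem_nhds]
  intro s hs
  have hK : IsCompact (convexHull ℝ (Ψ s)) := isCompact_convexHull_aux (hc s)
  obtain ⟨δ, hδ, hsub⟩ := hK.exists_thickening_subset_open hO hs
  have hconv : Convex ℝ (Metric.thickening δ (convexHull ℝ (Ψ s))) :=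
    (convex_convexHull ℝ (Ψ s)).thickening δ
  have hUopen : IsOpen (Metric.thickening δ (convexHull ℝ (Ψ s))) :=
    Metric.isOpen_thickening
  have hmem : s ∈ {t : S | Ψ t ⊆ Metric.thickening δ (convexHull ℝ (Ψ s))} :=
    (subset_convexHull ℝ (Ψ s)).trans (Metric.self_subset_thickening hδ _)
  refine Filter.mem_of_superset ((h _ hUopen).mem_nhds hmem) ?_
  intro t ht
  exact (convexHull_min ht hconv).trans hsub
end

section
/- Let S and X be Polish spaces, \lambda a Borel probability measure on S, and (S_k)_{k \geq 1} a sequence of disjoint compact subsets of S with \lambda(\bigcup_k S_k) = 1. For each k define \lambda_k(D) = \lambda(D)/\lambda(S_k) for measurable D \subseteq S_k. Let (\nu_m)_{m \geq 0} be transition probabilities from S to \mathcal{M}(X) and \tau_m = \lambda \diamond \nu_m. Then \tau_m converges weakly to \tau_0 if and only if \lambda_k \diamond \nu_m converges weakly to \lambda_k \diamond \nu_0 for every k \geq 1. -/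
open MeasureTheory ProbabilityTheory Filter Topology
open scoped ENNReal NNReal

section Helpers

variable {S X : Type*} [MeasurableSpace S] [MeasurableSpace X]

lemma my_compProd_restrict (μ : Measure S) [IsFiniteMeasure μ] (κ : Kernel S X)
    [IsMarkovKernel κ] {D : Set S} (hD : MeasurableSet D) :
    (μ.restrict D) ⊗ₘ κ = (μ ⊗ₘ κ).restrict (D ×ˢ Set.univ) := by
  ext s hs
  rw [Measure.compProd_apply hs, Measure.restrict_apply hs,
    Measure.compProd_apply (hs.inter (hD.prod MeasurableSet.univ)),
    ← lintegral_indicator hD]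
  refine lintegral_congr fun a => ?_
  by_cases ha : a ∈ D
  · rw [Set.indicator_of_mem ha, Set.preimage_inter,
      Set.mk_preimage_prod_right ha, Set.inter_univ]
  · simp [Set.indicator_of_notMem ha, Set.preimage_inter,
      Set.mk_preimage_prod_right_eq_empty ha]

lemma my_integral_comp_fst (μ : Measure S) [IsProbabilityMeasure μ] (κ : Kernel S X)
    [IsMarkovKernel κ] {φ : S → ℝ} (hφ : AEStronglyMeasurable φ μ) :
    ∫ p, φ p.1 ∂(μ ⊗ₘ κ) = ∫ s, φ s ∂μ := by
  have hmap : (μ ⊗ₘ κ).map Prod.fst = μ := Measure.fst_compProd μ κ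
  conv_rhs => rw [← hmap]
  rw [integral_map measurable_fst.aemeasurable (by rwa [hmap])]

lemma my_integral_smul_restrict (μ : Measure S) [IsProbabilityMeasure μ] (κ : Kernel S X)
    [IsMarkovKernel κ] {D : Set S} (hD : MeasurableSet D) (f : S × X → ℝ) :
    ∫ p, f p ∂(((μ D)⁻¹ • μ.restrict D) ⊗ₘ κ)
      = (μ D).toReal⁻¹ * ∫ p in D ×ˢ Set.univ, f p ∂(μ ⊗ₘ κ) := by
  rw [Measure.compProd_smul_left, my_compProd_restrict μ κ hD, integral_smul_measure,
    ENNReal.toReal_inv, smul_eq_mul]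

lemma my_integrable_of_bound {α : Type*} [MeasurableSpace α] (ρ : Measure α) [IsFiniteMeasure ρ]
    {h : α → ℝ} (hm : AEStronglyMeasurable h ρ) (C : ℝ) (hb : ∀ p, |h p| ≤ C) :
    Integrable h ρ :=
  (integrable_const C).mono' hm (Filter.Eventually.of_forall (by simpa [Real.norm_eq_abs] using hb))

lemma tendsto_of_uniform_approx {A : ℕ → ℝ}
    (h : ∀ ε > 0, ∃ B : ℕ → ℝ, Tendsto B atTop (𝓝 (B 0)) ∧ ∀ m, |A m - B m| ≤ ε) :
    Tendsto A atTop (𝓝 (A 0)) := by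
  rw [Metric.tendsto_atTop]
  intro ε hε
  obtain ⟨B, hB, hb⟩ := h (ε / 3) (by linarith)
  obtain ⟨N, hN⟩ := Metric.tendsto_atTop.1 hB (ε / 3) (by linarith)
  refine ⟨N, fun m hm => ?_⟩
  have h1 := hb m
  have h2 := hN m hm
  have h3 := hb 0
  rw [Real.dist_eq] at h2 ⊢
  have t1 := abs_sub_le (A m) (B m) (A 0)
  have t2 := abs_sub_le (B m) (B 0) (A 0)
  have t3 : |B 0 - A 0| = |A 0 - B 0| := abs_sub_comm _ _
  linarith

end Helpers

lemma exists_approx {S : Type*} [TopologicalSpace S] [PolishSpace S] [MeasurableSpace S]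
    [BorelSpace S] (lam : Measure S) [IsFiniteMeasure lam] {K : Set S} (hK : IsCompact K)
    {η : ℝ≥0∞} (hη : 0 < η) :
    ∃ (g : BoundedContinuousFunction S ℝ) (U : Set S), MeasurableSet U ∧ lam U ≤ η ∧
      (∀ s, 0 ≤ g s) ∧ (∀ s, g s ≤ 1) ∧
      ∀ s, |Set.indicator K (fun _ => (1 : ℝ)) s - g s|
        ≤ Set.indicator U (fun _ => (1 : ℝ)) s := by
  letI := TopologicalSpace.upgradeIsCompletelyMetrizable S
  have hKc : IsClosed K := hK.isClosed
  have hKm : MeasurableSet K := hKc.measurableSet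
  have hKfin : lam K ≠ ∞ := measure_ne_top _ _
  obtain ⟨V, hKV, hVopen, hVlt⟩ := Set.exists_isOpen_lt_add K hKfin hη.ne'
  obtain ⟨gc, hgV, hgK, hgIcc⟩ := exists_continuous_zero_one_of_isClosed
    hVopen.isClosed_compl hKc (Set.disjoint_left.mpr fun a ha haK => ha (hKV haK))
  have hbd : ∀ x y : S, dist (gc x) (gc y) ≤ 1 := by
    intro x y
    have h1 := hgIcc x
    have h2 := hgIcc y
    simp only [Set.mem_Icc] at h1 h2
    rw [Real.dist_eq, abs_sub_le_iff]
    exact ⟨by linarith [h1.2, h2.1], by linarith [h2.2, h1.1]⟩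
  refine ⟨⟨gc, 1, hbd⟩, V \ K, hVopen.measurableSet.diff hKm, ?_, ?_, ?_, ?_⟩
  · rw [measure_diff hKV hKm.nullMeasurableSet hKfin]
    exact tsub_le_iff_right.mpr (le_of_lt (by rwa [add_comm] at hVlt))
  · exact fun s => (hgIcc s).1
  · exact fun s => (hgIcc s).2
  · intro s
    show |Set.indicator K (fun _ => (1 : ℝ)) s - gc s|
        ≤ Set.indicator (V \ K) (fun _ => (1 : ℝ)) s
    by_cases hs : s ∈ K
    · have h1 : gc s = 1 := hgK hs
      rw [Set.indicator_of_mem hs, h1, sub_self, abs_zero]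
      exact Set.indicator_nonneg (fun _ _ => zero_le_one) s
    · by_cases hv : s ∈ V
      · rw [Set.indicator_of_notMem hs, Set.indicator_of_mem (show s ∈ V \ K from ⟨hv, hs⟩),
          zero_sub, abs_neg, abs_of_nonneg (hgIcc s).1]
        exact (hgIcc s).2
      · have h0 : gc s = 0 := hgV hv
        rw [Set.indicator_of_notMem hs, Set.indicator_of_notMem (fun h : s ∈ V \ K => hv h.1),
          h0, sub_zero, abs_zero]

section DiffBound

variable {S X : Type*}
    [TopologicalSpace S] [PolishSpace S] [MeasurableSpace S] [BorelSpace S]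
    [TopologicalSpace X] [PolishSpace X] [MeasurableSpace X] [BorelSpace X]

lemma diff_bound (μ : Measure S) [IsProbabilityMeasure μ] (κ : Kernel S X) [IsMarkovKernel κ]
    (f : BoundedContinuousFunction (S × X) ℝ) {K U : Set S}
    (hK : MeasurableSet K) (hU : MeasurableSet U)
    (g : S → ℝ) (hgc : Continuous g) (hg1 : ∀ s, |g s| ≤ 1)
    (hgb : ∀ s, |Set.indicator K (fun _ => (1 : ℝ)) s - g s|
      ≤ Set.indicator U (fun _ => (1 : ℝ)) s) :
    |(∫ p in K ×ˢ Set.univ, f p ∂(μ ⊗ₘ κ)) - ∫ p, g p.1 * f p ∂(μ ⊗ₘ κ)|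
      ≤ ‖f‖ * (μ U).toReal := by
  set ρ := μ ⊗ₘ κ with hρ
  have hfm : Measurable f := f.continuous.measurable
  set χ : S → ℝ := Set.indicator K (fun _ => 1) with hχ
  have hχm : Measurable χ := measurable_const.indicator hK
  have hχ1 : ∀ s, |χ s| ≤ 1 := by
    intro s
    by_cases hs : s ∈ K
    · simp [hχ, Set.indicator_of_mem hs]
    · simp [hχ, Set.indicator_of_notMem hs]
  have hfb : ∀ p : S × X, |f p| ≤ ‖f‖ := by
    intro p
    have := f.norm_coe_le_norm p
    rwa [Real.norm_eq_abs] at this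
  have int1 : Integrable (fun p : S × X => χ p.1 * f p) ρ := by
    refine my_integrable_of_bound ρ
      (((hχm.comp measurable_fst).mul hfm).aestronglyMeasurable) ‖f‖ fun p => ?_
    rw [abs_mul]
    calc |χ p.1| * |f p| ≤ 1 * ‖f‖ :=
          mul_le_mul (hχ1 p.1) (hfb p) (abs_nonneg _) zero_le_one
      _ = ‖f‖ := one_mul _
  have int2 : Integrable (fun p : S × X => g p.1 * f p) ρ := by
    refine my_integrable_of_bound ρ
      (((hgc.measurable.comp measurable_fst).mul hfm).aestronglyMeasurable) ‖f‖ fun p => ?_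
    rw [abs_mul]
    calc |g p.1| * |f p| ≤ 1 * ‖f‖ :=
          mul_le_mul (hg1 p.1) (hfb p) (abs_nonneg _) zero_le_one
      _ = ‖f‖ := one_mul _
  have h1 : ∫ p in K ×ˢ Set.univ, f p ∂ρ = ∫ p, χ p.1 * f p ∂ρ := by
    rw [← integral_indicator (hK.prod MeasurableSet.univ)]
    refine integral_congr_ae (Filter.Eventually.of_forall fun p => ?_)
    by_cases hp : p.1 ∈ K
    · rw [Set.indicator_of_mem (Set.mem_prod.mpr ⟨hp, Set.mem_univ _⟩)]
      show f p = χ p.1 * f p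
      rw [hχ, Set.indicator_of_mem hp, one_mul]
    · rw [Set.indicator_of_notMem (fun h => hp (Set.mem_prod.mp h).1)]
      show (0 : ℝ) = χ p.1 * f p
      rw [hχ, Set.indicator_of_notMem hp, zero_mul]
  rw [h1, ← integral_sub int1 int2]
  have hb : ∀ p : S × X, |χ p.1 * f p - g p.1 * f p|
      ≤ ‖f‖ * Set.indicator U (fun _ => (1 : ℝ)) p.1 := by
    intro p
    rw [← sub_mul, abs_mul]
    calc |χ p.1 - g p.1| * |f p|
        ≤ Set.indicator U (fun _ => (1 : ℝ)) p.1 * ‖f‖ :=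
          mul_le_mul (hgb p.1) (hfb p) (abs_nonneg _)
            (Set.indicator_nonneg (fun _ _ => zero_le_one) p.1)
      _ = ‖f‖ * Set.indicator U (fun _ => (1 : ℝ)) p.1 := mul_comm _ _
  have hUm : Measurable (Set.indicator U (fun _ => (1 : ℝ))) := measurable_const.indicator hU
  have hind1 : ∀ s, |Set.indicator U (fun _ => (1 : ℝ)) s| ≤ 1 := by
    intro s
    by_cases hs : s ∈ U
    · simp [Set.indicator_of_mem hs]
    · simp [Set.indicator_of_notMem hs]
  have hintU : Integrable (fun p : S × X => ‖f‖ * Set.indicator U (fun _ => (1 : ℝ)) p.1) ρ := by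
    refine my_integrable_of_bound ρ
      ((measurable_const.mul (hUm.comp measurable_fst)).aestronglyMeasurable) ‖f‖ fun p => ?_
    rw [abs_mul, abs_of_nonneg (norm_nonneg f)]
    calc ‖f‖ * |Set.indicator U (fun _ => (1 : ℝ)) p.1| ≤ ‖f‖ * 1 :=
          mul_le_mul_of_nonneg_left (hind1 p.1) (norm_nonneg f)
      _ = ‖f‖ := mul_one _
  calc |∫ p, (χ p.1 * f p - g p.1 * f p) ∂ρ|
      ≤ ∫ p, |χ p.1 * f p - g p.1 * f p| ∂ρ := by
        have := norm_integral_le_integral_norm (μ := ρ)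
          (fun p : S × X => χ p.1 * f p - g p.1 * f p)
        simpa [Real.norm_eq_abs] using this
    _ ≤ ∫ p, ‖f‖ * Set.indicator U (fun _ => (1 : ℝ)) p.1 ∂ρ :=
        integral_mono (int1.sub int2).abs hintU hb
    _ = ‖f‖ * ∫ p, Set.indicator U (fun _ => (1 : ℝ)) p.1 ∂ρ := integral_const_mul _ _
    _ = ‖f‖ * ∫ s, Set.indicator U (fun _ => (1 : ℝ)) s ∂μ := by
        rw [my_integral_comp_fst μ κ hUm.aestronglyMeasurable]
    _ = ‖f‖ * (μ U).toReal := by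
        rw [integral_indicator_const (1 : ℝ) hU, smul_eq_mul, mul_one, Measure.real]

end DiffBound

/-- Let `λ` be a Borel probability measure on a Polish space `S`, and `(S_k)` disjoint
compact subsets of positive measure with `λ(⋃ S_k) = 1`, with normalized restrictions
`λ_k = λ(S_k)⁻¹ • λ|_{S_k}`. Let `(ν_m)` be transition probabilities from `S` to a
Polish space `X` and `τ_m = λ ⋄ ν_m`. Then `τ_m` converges weakly to `τ_0` iff
`λ_k ⋄ ν_m` converges weakly to `λ_k ⋄ ν_0` for every `k`. -/
theorem weak_convergence_piecewise {S X : Type*}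
    [TopologicalSpace S] [PolishSpace S] [MeasurableSpace S] [BorelSpace S]
    [TopologicalSpace X] [PolishSpace X] [MeasurableSpace X] [BorelSpace X]
    (lam : Measure S) [IsProbabilityMeasure lam]
    (Sk : ℕ → Set S) (hcomp : ∀ k, IsCompact (Sk k))
    (hdisj : Pairwise (Function.onFun Disjoint Sk))
    (hfull : lam (⋃ k, Sk k) = 1) (hpos : ∀ k, 0 < lam (Sk k))
    (ν : ℕ → Kernel S X) [∀ m, IsMarkovKernel (ν m)] :
    (∀ f : BoundedContinuousFunction (S × X) ℝ,
        Tendsto (fun m => ∫ p, f p ∂(lam ⊗ₘ ν m)) atTop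
          (𝓝 (∫ p, f p ∂(lam ⊗ₘ ν 0)))) ↔
    (∀ k, ∀ f : BoundedContinuousFunction (S × X) ℝ,
        Tendsto
          (fun m => ∫ p, f p ∂(((lam (Sk k))⁻¹ • lam.restrict (Sk k)) ⊗ₘ ν m)) atTop
          (𝓝 (∫ p, f p ∂(((lam (Sk k))⁻¹ • lam.restrict (Sk k)) ⊗ₘ ν 0)))) := by
  have hT2 : ∀ k, MeasurableSet (Sk k) := fun k => (hcomp k).isClosed.measurableSet
  have hfin : ∀ k, lam (Sk k) ≠ ∞ := fun k => measure_ne_top _ _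
  have htoReal_pos : ∀ k, 0 < (lam (Sk k)).toReal := fun k =>
    ENNReal.toReal_pos (hpos k).ne' (hfin k)
  constructor
  · -- forward direction
    intro h k f
    have hKm : MeasurableSet (Sk k) := hT2 k
    have hrw : ∀ m, ∫ p, f p ∂(((lam (Sk k))⁻¹ • lam.restrict (Sk k)) ⊗ₘ ν m)
        = (lam (Sk k)).toReal⁻¹ * ∫ p in (Sk k) ×ˢ Set.univ, f p ∂(lam ⊗ₘ ν m) := fun m =>
      my_integral_smul_restrict lam (ν m) hKm f
    simp only [hrw]
    have hA : Tendsto (fun m => ∫ p in (Sk k) ×ˢ Set.univ, f p ∂(lam ⊗ₘ ν m)) atTop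
        (𝓝 (∫ p in (Sk k) ×ˢ Set.univ, f p ∂(lam ⊗ₘ ν 0))) := by
      refine tendsto_of_uniform_approx ?_
      intro ε hε
      have hpos' : (0 : ℝ) < ε / (‖f‖ + 1) := by positivity
      obtain ⟨g, U, hUm, hUle, hg0, hg1', hgb⟩ := exists_approx lam (hcomp k)
        (η := ENNReal.ofReal (ε / (‖f‖ + 1))) (ENNReal.ofReal_pos.mpr hpos')
      refine ⟨fun m => ∫ p, g p.1 * f p ∂(lam ⊗ₘ ν m), ?_, ?_⟩
      · set G : BoundedContinuousFunction (S × X) ℝ :=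
          (g.compContinuous (ContinuousMap.mk Prod.fst continuous_fst)) * f with hGdef
        have hG := h G
        have hGid : ∀ (μ' : Measure (S × X)),
            ∫ p, G p ∂μ' = ∫ p, g p.1 * f p ∂μ' := fun μ' =>
          integral_congr_ae (Filter.Eventually.of_forall fun p => rfl)
        simpa only [hGid] using hG
      · intro m
        have hbd := diff_bound lam (ν m) f hKm hUm g g.continuous
          (fun s => by rw [abs_of_nonneg (hg0 s)]; exact hg1' s) hgb
        refine hbd.trans ?_
        have h2 : (lam U).toReal ≤ ε / (‖f‖ + 1) := by
          have := ENNReal.toReal_mono ENNReal.ofReal_ne_top hUle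
          rwa [ENNReal.toReal_ofReal hpos'.le] at this
        calc ‖f‖ * (lam U).toReal ≤ ‖f‖ * (ε / (‖f‖ + 1)) :=
              mul_le_mul_of_nonneg_left h2 (norm_nonneg f)
          _ ≤ ε := by
              have hf1 : (0 : ℝ) < ‖f‖ + 1 := by positivity
              rw [mul_comm, div_mul_eq_mul_div, div_le_iff₀ hf1]
              nlinarith [norm_nonneg f, hε.le]
    exact hA.const_mul _
  · -- reverse direction
    intro h f
    refine tendsto_of_uniform_approx ?_
    intro ε hε
    have hpos' : (0 : ℝ) < ε / (‖f‖ + 1) := by positivity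
    set E : ℕ → Set S := fun n => ⋃ k ∈ Finset.range n, Sk k with hE
    have hEm : ∀ n, MeasurableSet (E n) := fun n =>
      (Finset.range n).measurableSet_biUnion (fun k _ => hT2 k)
    have hEmono : Monotone E := by
      intro a b hab x hx
      simp only [hE, Set.mem_iUnion, Finset.mem_range] at hx ⊢
      obtain ⟨k, hk, hxk⟩ := hx
      exact ⟨k, lt_of_lt_of_le hk hab, hxk⟩
    have hEU : ⋃ n, E n = ⋃ k, Sk k := by
      ext x
      simp only [hE, Set.mem_iUnion, Finset.mem_range]
      exact ⟨fun ⟨n, k, _, hxk⟩ => ⟨k, hxk⟩, fun ⟨k, hxk⟩ => ⟨k + 1, k, Nat.lt_succ_self k, hxk⟩⟩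
    have htm : Tendsto (fun n => (lam (E n)).toReal) atTop (𝓝 1) := by
      have h1 : Tendsto (fun n => lam (E n)) atTop (𝓝 (lam (⋃ n, E n))) :=
        tendsto_measure_iUnion_atTop hEmono
      rw [hEU, hfull] at h1
      have h2 := (ENNReal.tendsto_toReal (by simp : (1 : ℝ≥0∞) ≠ ∞)).comp h1
      simpa [Function.comp_def] using h2
    obtain ⟨N, hN⟩ := (Metric.tendsto_atTop.1 htm) (ε / (‖f‖ + 1)) hpos'
    have hNN := hN N le_rfl
    have hcompl : (lam ((E N)ᶜ)).toReal ≤ ε / (‖f‖ + 1) := by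
      have hle1 : lam (E N) ≤ 1 := prob_le_one
      rw [measure_compl (hEm N) (measure_ne_top _ _), measure_univ,
        ENNReal.toReal_sub_of_le hle1 (by simp), ENNReal.toReal_one]
      rw [Real.dist_eq] at hNN
      have habs := abs_sub_le_iff.1 hNN.le
      linarith [habs.2]
    refine ⟨fun m => ∫ p in (E N) ×ˢ Set.univ, f p ∂(lam ⊗ₘ ν m), ?_, ?_⟩
    · have hsum : ∀ m, ∫ p in (E N) ×ˢ Set.univ, f p ∂(lam ⊗ₘ ν m)
          = ∑ k ∈ Finset.range N, (lam (Sk k)).toReal *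
              ∫ p, f p ∂(((lam (Sk k))⁻¹ • lam.restrict (Sk k)) ⊗ₘ ν m) := by
        intro m
        have hprod : (E N) ×ˢ (Set.univ : Set X)
            = ⋃ k ∈ Finset.range N, (Sk k ×ˢ (Set.univ : Set X)) := by
          ext p
          simp [hE, Set.mem_iUnion, Set.mem_prod]
        rw [hprod, integral_biUnion_finset (Finset.range N)
          (fun k _ => (hT2 k).prod MeasurableSet.univ)
          (fun i _ j _ hij => Set.disjoint_left.mpr fun p hp hq =>
            Set.disjoint_left.1 (hdisj hij) hp.1 hq.1)
          (fun k _ => ((f.integrable _).integrableOn))]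
        refine Finset.sum_congr rfl fun k _ => ?_
        rw [my_integral_smul_restrict lam (ν m) (hT2 k) f, ← mul_assoc,
          mul_inv_cancel₀ (htoReal_pos k).ne', one_mul]
      simp only [hsum]
      exact tendsto_finset_sum _ fun k _ => ((h k f).const_mul _)
    · intro m
      have hint : Integrable f (lam ⊗ₘ ν m) := f.integrable _
      have hsplit := integral_add_compl ((hEm N).prod MeasurableSet.univ) hint
      have hdiffeq : (∫ p, f p ∂(lam ⊗ₘ ν m)) - (∫ p in (E N) ×ˢ Set.univ, f p ∂(lam ⊗ₘ ν m))
          = ∫ p in ((E N) ×ˢ (Set.univ : Set X))ᶜ, f p ∂(lam ⊗ₘ ν m) := by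
        linarith [hsplit]
      rw [hdiffeq]
      have hτcompl : (lam ⊗ₘ ν m) (((E N) ×ˢ (Set.univ : Set X))ᶜ) = lam ((E N)ᶜ) := by
        have hc : ((E N) ×ˢ (Set.univ : Set X))ᶜ = Prod.fst ⁻¹' ((E N)ᶜ) := by
          rw [Set.prod_univ, ← Set.preimage_compl]
        rw [hc]
        have hfst := Measure.fst_apply (ρ := lam ⊗ₘ ν m) (hEm N).compl
        rw [← hfst, Measure.fst_compProd]
      have hb := norm_setIntegral_le_of_norm_le_const (μ := lam ⊗ₘ ν m)
        (s := ((E N) ×ˢ (Set.univ : Set X))ᶜ) (C := ‖f‖) (measure_lt_top _ _)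
        (fun x _ => f.norm_coe_le_norm x)
      rw [Real.norm_eq_abs] at hb
      refine hb.trans ?_
      rw [Measure.real, hτcompl]
      calc ‖f‖ * (lam ((E N)ᶜ)).toReal ≤ ‖f‖ * (ε / (‖f‖ + 1)) :=
            mul_le_mul_of_nonneg_left hcompl (norm_nonneg f)
        _ ≤ ε := by
            have hf1 : (0 : ℝ) < ‖f‖ + 1 := by positivity
            rw [mul_comm, div_mul_eq_mul_div, div_le_iff₀ hf1]
            nlinarith [norm_nonneg f, hε.le]
end
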